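/- (Heisler) Let X be a real Banach space and let A, B : X ⇉ X* be maximal monotone operators with dom A = dom B = X. Then A + B is maximal monotone. -/

import Mathlib

open Set Filter Pointwise

noncomputable section

variable {X : Type*}

abbrev Dual' (X : Type*) [NormedAddCommGroup X] [NormedSpace ℝ X] := X →L[ℝ] ℝ

section Defs
variable [NormedAddCommGroup X] [NormedSpace ℝ X]

/-- `A` is a monotone operator. -/
def MonotoneOp (A : X → Set (Dual' X)) : Prop :=
  ∀ x y (x' y' : Dual' X), x' ∈ A x → y' ∈ A y → 0 ≤ (x' - y') (x - y)

/-- `A` is maximal monotone: monotone, and every monotonically related pair is in the graph. -/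
def MaxMonotone (A : X → Set (Dual' X)) : Prop :=
  MonotoneOp A ∧
    ∀ x (x' : Dual' X), (∀ y y', y' ∈ A y → 0 ≤ (x' - y') (x - y)) → x' ∈ A x

/-- domain of a set-valued operator -/
def domOp (A : X → Set (Dual' X)) : Set X := {x | (A x).Nonempty}

/-- pointwise Minkowski sum of two set-valued operators -/
def opSum (A B : X → Set (Dual' X)) : X → Set (Dual' X) := fun x => A x + B x

/-- normal cone operator of a set `C` -/
def normalCone (C : Set X) : X → Set (Dual' X) :=
  fun x => {x' | x ∈ C ∧ ∀ c ∈ C, x' (c - x) ≤ 0}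

/-- the Fitzpatrick function of `A` -/
def fitz (A : X → Set (Dual' X)) : X × Dual' X → EReal :=
  fun p => ⨆ q ∈ {q : X × Dual' X | q.2 ∈ A q.1},
    ((q.2 p.1 + p.2 q.1 - q.2 q.1 : ℝ) : EReal)

/-- `A` is maximal monotone of type (FPV) -/
def FPV (A : X → Set (Dual' X)) : Prop :=
  MaxMonotone A ∧
    ∀ U : Set X, IsOpen U → Convex ℝ U → (U ∩ domOp A).Nonempty →
      ∀ x (x' : Dual' X), x ∈ U →
        (∀ y y', y' ∈ A y → y ∈ U → 0 ≤ (x' - y') (x - y)) → x' ∈ A x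

/-- `A` is a linear relation: its graph is a linear subspace of `X × X*` -/
def LinearRel (A : X → Set (Dual' X)) : Prop :=
  (0 : Dual' X) ∈ A 0 ∧
  (∀ x y (x' y' : Dual' X), x' ∈ A x → y' ∈ A y → x' + y' ∈ A (x + y)) ∧
  (∀ (c : ℝ) x (x' : Dual' X), x' ∈ A x → c • x' ∈ A (c • x))

/-- subdifferential of an extended-real-valued function -/
def subdiff (f : X → EReal) : X → Set (Dual' X) :=
  fun x => {x' | ∀ y, ((x' (y - x) : ℝ) : EReal) + f x ≤ f y}

/-- `f` is proper: never `⊥` and not identically `⊤` -/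
def ProperFun (f : X → EReal) : Prop := (∀ x, f x ≠ ⊥) ∧ ∃ x, f x ≠ ⊤

/-- convexity for extended-real-valued functions -/
def EConvexOn (f : X → EReal) : Prop :=
  ∀ x y (t : ℝ), 0 ≤ t → t ≤ 1 →
    f (t • x + (1 - t) • y) ≤ (t : EReal) * f x + ((1 - t : ℝ) : EReal) * f y

/-- effective domain of an extended-real-valued function -/
def domFun (f : X → EReal) : Set X := {x | f x ≠ ⊤}

end Defs

variable [NormedAddCommGroup X] [NormedSpace ℝ X] [CompleteSpace X]

open Topology NormedSpace

lemma mapClusterPt_mem_closed {α Y : Type*} [TopologicalSpace Y] {l : Filter α} {F : α → Y}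
    {c : Y} (h : MapClusterPt c l F) {s : Set Y} (hs : IsClosed s)
    (hev : ∀ᶠ t in l, F t ∈ s) : c ∈ s := by
  have hsmem : s ∈ Filter.map F l := mem_map.2 hev
  have := (clusterPt_iff_forall_mem_closure.1 h.clusterPt) s hsmem
  rwa [hs.closure_eq] at this


lemma weakdual_repr (f : WeakDual ℝ X →L[ℝ] ℝ) : ∃ z : X, ∀ w : WeakDual ℝ X, f w = w z := by
  have hbasis := LinearMap.hasBasis_weakBilin (topDualPairing ℝ X)
  have hnhd : f ⁻¹' (Metric.ball (0:ℝ) 1) ∈ 𝓝 (0 : WeakDual ℝ X) := by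
    have : Metric.ball (0:ℝ) 1 ∈ 𝓝 (f 0) := by
      rw [map_zero]; exact Metric.ball_mem_nhds 0 one_pos
    exact f.continuous.continuousAt.preimage_mem_nhds this
  obtain ⟨s, hs, hsub⟩ := hbasis.mem_iff.1 hnhd
  obtain ⟨i, r, hr, rfl⟩ := (topDualPairing ℝ X).toSeminormFamily.basisSets_iff.1 hs
  -- kernel containment
  set L : i → WeakDual ℝ X →ₗ[ℝ] ℝ := fun y =>
    (((topDualPairing ℝ X).flip (y : X)).comp
      (WeakDual.toStrongDual (E := X) (𝕜 := ℝ)).toLinearMap) with hL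
  have hLapp : ∀ (y : i) (w : WeakDual ℝ X), L y w = w (y : X) := fun y w => rfl
  have hker : (⨅ y : i, LinearMap.ker (L y)) ≤ LinearMap.ker (f : WeakDual ℝ X →ₗ[ℝ] ℝ) := by
    intro w hw
    simp only [Submodule.mem_iInf, LinearMap.mem_ker] at hw
    have hzero : ∀ y ∈ i, w y = 0 := fun y hy => hw ⟨y, hy⟩
    have hsmall : ∀ c : ℝ, |f (c • w)| < 1 := by
      intro c
      have hmem : (c • w) ∈ Seminorm.ball (i.sup ((topDualPairing ℝ X).toSeminormFamily)) 0 r := by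
        show (i.sup ((topDualPairing ℝ X).toSeminormFamily)) (WeakDual.toStrongDual (c • w) - 0) < r
        rw [sub_zero]
        refine Seminorm.finset_sup_apply_lt hr fun y hy => ?_
        simp only [LinearMap.toSeminormFamily_apply]
        show ‖c * w y‖ < r
        rw [hzero y hy, mul_zero, norm_zero]
        exact hr
      have := hsub hmem
      rw [show ((1:ℝ)) = 1 from rfl] at this
      calc |f (c • w)| = ‖f (c • w)‖ := rfl
        _ < 1 := by simpa using (show f (c • w) ∈ Metric.ball (0:ℝ) 1 from this)
    by_contra hne
    have hfw : f w ≠ 0 := hne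
    have := hsmall (2 / f w)
    rw [map_smul, smul_eq_mul, div_mul_cancel₀ 2 hfw] at this
    norm_num at this
  have hspan := mem_span_of_iInf_ker_le_ker hker
  obtain ⟨c, hc⟩ := (Submodule.mem_span_range_iff_exists_fun ℝ).1 hspan
  refine ⟨∑ y : i, c y • (y : X), fun w => ?_⟩
  have hce := congrArg (fun g : WeakDual ℝ X →ₗ[ℝ] ℝ => g w) hc
  simp only [LinearMap.coe_sum, Finset.sum_apply, LinearMap.smul_apply, smul_eq_mul] at hce
  have hw : w (∑ y : i, c y • (y : X)) = ∑ y : i, c y * w y := by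
    rw [map_sum]
    exact Finset.sum_congr rfl fun y _ => by rw [map_smul, smul_eq_mul]
  have hce' : ∑ y : i, c y * w (y : X) = f w := by
    have : ∀ y : i, (L y) w = w (y : X) := fun y => hLapp y w
    calc ∑ y : i, c y * w (y : X) = ∑ y : i, c y * (L y) w := by
          exact Finset.sum_congr rfl fun y _ => by rw [this y]
      _ = f w := hce
  rw [hw, hce']

lemma locBdd (A : X → Set (Dual' X)) (hmono : MonotoneOp A) (hfull : domOp A = Set.univ)
    (x₀ : X) : ∃ δ > (0:ℝ), ∃ M : ℝ, ∀ y a, a ∈ A y → ‖y - x₀‖ ≤ δ → ‖a‖ ≤ M := by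
  have hne : ∀ y : X, (A y).Nonempty := fun y => by
    have : y ∈ domOp A := by rw [hfull]; trivial
    exact this
  set P : ℝ → X → Prop := fun c x => ∀ z a, a ∈ A z → ‖z - x₀‖ ≤ 1 → a (x - z) ≤ c with hP
  have hPall : ∀ x : X, ∃ n : ℕ, P n x := by
    intro x
    obtain ⟨x'', hx''⟩ := hne x
    obtain ⟨n, hn⟩ := exists_nat_ge (‖x''‖ * (‖x - x₀‖ + 1))
    refine ⟨n, fun z a ha hz => ?_⟩
    have h1 : 0 ≤ (x'' - a) (x - z) := hmono x z x'' a hx'' ha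
    have h2 : a (x - z) ≤ x'' (x - z) := by
      have := h1; simp only [ContinuousLinearMap.sub_apply] at this; linarith
    have h3 : x'' (x - z) ≤ ‖x''‖ * ‖x - z‖ :=
      le_trans (le_abs_self _) (by simpa using x''.le_opNorm (x - z))
    have h4 : ‖x - z‖ ≤ ‖x - x₀‖ + 1 := by
      have : x - z = (x - x₀) - (z - x₀) := by abel
      rw [this]
      exact le_trans (norm_sub_le _ _) (by linarith)
    calc a (x - z) ≤ ‖x''‖ * (‖x - x₀‖ + 1) := by
          refine le_trans h2 (le_trans h3 ?_)
          exact mul_le_mul_of_nonneg_left h4 (norm_nonneg _)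
      _ ≤ n := hn
  -- closedness
  have hclosed : ∀ n : ℕ, IsClosed {x : X | P n x} := by
    intro n
    have : {x : X | P n x} =
        ⋂ (z : X) (a : Dual' X) (_ : a ∈ A z) (_ : ‖z - x₀‖ ≤ 1), {x : X | a (x - z) ≤ n} := by
      ext x; simp [hP, mem_iInter]
    rw [this]
    refine isClosed_iInter fun z => isClosed_iInter fun a => isClosed_iInter fun _ =>
      isClosed_iInter fun _ => ?_
    have hc : Continuous fun x : X => a (x - z) := a.continuous.comp (continuous_id.sub continuous_const)
    exact isClosed_le hc continuous_const
  have hcover : (⋃ n : ℕ, {x : X | P n x}) = Set.univ := by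
    ext x; simp only [mem_iUnion, mem_univ, iff_true, mem_setOf_eq]
    exact hPall x
  obtain ⟨n, x₁, hx₁⟩ := nonempty_interior_of_iUnion_of_closed hclosed hcover
  obtain ⟨ρ, hρpos, hball⟩ := Metric.isOpen_iff.1 isOpen_interior x₁ hx₁
  have hballC : Metric.ball x₁ ρ ⊆ {x : X | P n x} := hball.trans interior_subset
  obtain ⟨m, hm⟩ := hPall ((2:ℝ) • x₀ - x₁)
  -- bound near x₀
  have hmid : ∀ x : X, ‖x - x₀‖ < ρ/2 → P (((n:ℝ) + m)/2) x := by
    intro x hx z a ha hz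
    set y := (2:ℝ) • x - (2:ℝ) • x₀ + x₁ with hy
    have hysub : y - x₁ = (2:ℝ) • (x - x₀) := by rw [hy]; module
    have hymem : y ∈ Metric.ball x₁ ρ := by
      rw [Metric.mem_ball, dist_eq_norm, hysub, norm_smul]
      simp only [Real.norm_ofNat]
      linarith
    have hPy : P n y := hballC hymem
    have hdecomp : x - z = (2⁻¹ : ℝ) • (y - z) + (2⁻¹ : ℝ) • (((2:ℝ) • x₀ - x₁) - z) := by
      rw [hy]; module
    have h1 := hPy z a ha hz
    have h2 := hm z a ha hz
    rw [hdecomp, map_add, map_smul, map_smul, smul_eq_mul, smul_eq_mul]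
    linarith
  -- conclude
  refine ⟨min 1 (ρ/8), lt_min one_pos (by linarith), (((n:ℝ) + m)/2) / (ρ/8), ?_⟩
  intro y a ha hy
  have hy1 : ‖y - x₀‖ ≤ 1 := le_trans hy (min_le_left _ _)
  have hy8 : ‖y - x₀‖ ≤ ρ/8 := le_trans hy (min_le_right _ _)
  have key : ∀ h : X, ‖h‖ ≤ ρ/8 → a h ≤ ((n:ℝ) + m)/2 := by
    intro h hh
    have hmem : ‖(y + h) - x₀‖ < ρ/2 := by
      have : (y + h) - x₀ = (y - x₀) + h := by abel
      rw [this]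
      exact lt_of_le_of_lt (norm_add_le _ _) (by linarith)
    have := hmid (y + h) hmem y a ha hy1
    simpa using this
  have hnn : (0:ℝ) ≤ ((n:ℝ) + m)/2 := by
    have := key 0 (by norm_num; linarith)
    simpa using this
  refine ContinuousLinearMap.opNorm_le_bound a (div_nonneg hnn (by linarith)) fun v => ?_
  rcases eq_or_ne v 0 with rfl | hv
  · simp
  · have hvn : (0:ℝ) < ‖v‖ := norm_pos_iff.2 hv
    set h := ((ρ/8) / ‖v‖) • v with hh
    have hhn : ‖h‖ ≤ ρ/8 := by
      rw [hh, norm_smul, Real.norm_eq_abs, abs_of_nonneg (by positivity)]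
      rw [div_mul_cancel₀ _ (ne_of_gt hvn)]
    have h1 : a h ≤ ((n:ℝ) + m)/2 := key h hhn
    have h2 : a (-h) ≤ ((n:ℝ) + m)/2 := key (-h) (by rwa [norm_neg])
    have hah : a h = ((ρ/8) / ‖v‖) * a v := by rw [hh, map_smul, smul_eq_mul]
    have h2' : -(ρ / 8 / ‖v‖ * a v) ≤ ((n:ℝ) + m)/2 := by
      rw [← hah, ← map_neg]; exact h2
    have habs : |ρ / 8 / ‖v‖ * a v| ≤ ((n:ℝ) + m)/2 := by
      rw [abs_le]; constructor <;> [linarith [h2']; (rw [← hah]; exact h1)]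
    have hpos : (0:ℝ) < (ρ/8) / ‖v‖ := by positivity
    rw [abs_mul, abs_of_pos hpos] at habs
    have e : ((n:ℝ) + m)/2 / (ρ/8) * ‖v‖ = (((n:ℝ) + m)/2) / (ρ/8/‖v‖) := by
      field_simp
    calc ‖a v‖ = |a v| := rfl
      _ ≤ _ := by
          rw [e, le_div_iff₀ hpos, mul_comm]
          exact habs

instance weakDualLocallyConvex : LocallyConvexSpace ℝ (WeakDual ℝ X) :=
  WeakBilin.locallyConvexSpace (B := topDualPairing ℝ X)


lemma finish_sep (A B : X → Set (Dual' X)) (hA : MaxMonotone A) (hB : MaxMonotone B)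
    (x : X) (x' : Dual' X) (M : ℝ)
    (key : ∀ z : X, ∃ a b : Dual' X,
      a ∈ A x ∧ ‖a‖ ≤ M ∧ b ∈ B x ∧ ‖b‖ ≤ M ∧ x' z ≤ a z + b z) :
    x' ∈ A x + B x := by
  set K : Set (WeakDual ℝ X) := WeakDual.toStrongDual ⁻¹' Metric.closedBall 0 M with hK
  have hKcomp : IsCompact K := WeakDual.isCompact_closedBall (𝕜 := ℝ) (E := X) 0 M
  have hKmem : ∀ a : Dual' X, ‖a‖ ≤ M → StrongDual.toWeakDual a ∈ K := by
    intro a ha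
    simp only [hK, mem_preimage, Metric.mem_closedBall, dist_zero_right]
    exact ha
  --separation argument
  set T_A : Set (WeakDual ℝ X) := {w | WeakDual.toStrongDual w ∈ A x} with hTA
  set T_B : Set (WeakDual ℝ X) := {w | WeakDual.toStrongDual w ∈ B x} with hTB
  have hchar : ∀ (C : X → Set (Dual' X)), MaxMonotone C →
      {w : WeakDual ℝ X | WeakDual.toStrongDual w ∈ C x} =
        ⋂ (y : X) (y' : Dual' X) (_ : y' ∈ C y),
          {w : WeakDual ℝ X | 0 ≤ w (x - y) - y' (x - y)} := by
    intro C hC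
    ext w
    simp only [mem_setOf_eq, mem_iInter]
    constructor
    · intro hw y y' hy'
      have := hC.1 x y (WeakDual.toStrongDual w) y' hw hy'
      simp only [ContinuousLinearMap.sub_apply] at this
      exact this
    · intro hw
      refine hC.2 x _ fun y y' hy' => ?_
      have := hw y y' hy'
      simp only [ContinuousLinearMap.sub_apply]
      exact this
  have hclosedhalf : ∀ (y : X) (y' : Dual' X),
      IsClosed {w : WeakDual ℝ X | 0 ≤ w (x - y) - y' (x - y)} := fun y y' =>
    isClosed_le continuous_const ((WeakDual.eval_continuous (x - y)).sub continuous_const)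
  have hconvexhalf : ∀ (y : X) (y' : Dual' X),
      Convex ℝ {w : WeakDual ℝ X | 0 ≤ w (x - y) - y' (x - y)} := by
    intro y y'
    have : {w : WeakDual ℝ X | 0 ≤ w (x - y) - y' (x - y)}
        = {w : WeakDual ℝ X | y' (x - y) ≤ w (x - y)} := by
      ext w; simp only [mem_setOf_eq]; constructor <;> intro h <;> linarith
    rw [this]
    exact convex_halfSpace_ge (⟨fun a b => rfl, fun c a => rfl⟩ :
      IsLinearMap ℝ fun w : WeakDual ℝ X => w (x - y)) (y' (x - y))
  have hTAclosed : IsClosed T_A := by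
    rw [hTA, hchar A hA]
    exact isClosed_iInter fun y => isClosed_iInter fun y' => isClosed_iInter fun _ =>
      hclosedhalf y y'
  have hTBclosed : IsClosed T_B := by
    rw [hTB, hchar B hB]
    exact isClosed_iInter fun y => isClosed_iInter fun y' => isClosed_iInter fun _ =>
      hclosedhalf y y'
  have hTAconv : Convex ℝ T_A := by
    rw [hTA, hchar A hA]
    exact convex_iInter fun y => convex_iInter fun y' => convex_iInter fun _ =>
      hconvexhalf y y'
  have hTBconv : Convex ℝ T_B := by
    rw [hTB, hchar B hB]
    exact convex_iInter fun y => convex_iInter fun y' => convex_iInter fun _ =>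
      hconvexhalf y y'
  have hKclosed : IsClosed K := WeakDual.isClosed_closedBall 0 M
  have hKconv : Convex ℝ K :=
    (convex_closedBall (0 : StrongDual ℝ X) M).linear_preimage
      (WeakDual.toStrongDual (𝕜 := ℝ) (E := X)).toLinearMap
  set SA : Set (WeakDual ℝ X) := T_A ∩ K with hSA
  set SB : Set (WeakDual ℝ X) := T_B ∩ K with hSB
  have hSAcomp : IsCompact SA :=
    hKcomp.of_isClosed_subset (hTAclosed.inter hKclosed) inter_subset_right
  have hSBcomp : IsCompact SB :=
    hKcomp.of_isClosed_subset (hTBclosed.inter hKclosed) inter_subset_right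
  have hSAconv : Convex ℝ SA := hTAconv.inter hKconv
  have hSBconv : Convex ℝ SB := hTBconv.inter hKconv
  set S : Set (WeakDual ℝ X) := SA + SB with hS
  have hScomp : IsCompact S := hSAcomp.add hSBcomp
  have hSconv : Convex ℝ S := hSAconv.add hSBconv
  have hSclosed : IsClosed S := hScomp.isClosed
  by_cases hx'S : StrongDual.toWeakDual x' ∈ S
  · obtain ⟨wa, hwa, wb, hwb, hsum⟩ := Set.mem_add.1 hx'S
    have heq : WeakDual.toStrongDual wa + WeakDual.toStrongDual wb = x' := by
      have := congrArg (WeakDual.toStrongDual (𝕜 := ℝ) (E := X)) hsum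
      simpa using this
    rw [show x' = WeakDual.toStrongDual wa + WeakDual.toStrongDual wb from heq.symm]
    exact Set.add_mem_add hwa.1 hwb.1
  · exfalso
    obtain ⟨f, u, hfS, hfx⟩ := geometric_hahn_banach_closed_point hSconv hSclosed hx'S
    obtain ⟨z₀, hz₀⟩ := weakdual_repr f
    obtain ⟨a, b, haA, han, hbB, hbn, hineq⟩ := key z₀
    have hmemS : StrongDual.toWeakDual a + StrongDual.toWeakDual b ∈ S := by
      refine Set.add_mem_add ⟨?_, hKmem a han⟩ ⟨?_, hKmem b hbn⟩
      · exact haA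
      · exact hbB
    have h1 := hfS _ hmemS
    have h2 : f (StrongDual.toWeakDual a + StrongDual.toWeakDual b) = a z₀ + b z₀ := by
      rw [hz₀]; rfl
    have h3 : f (StrongDual.toWeakDual x') = x' z₀ := by rw [hz₀]; rfl
    rw [h2] at h1
    rw [h3] at hfx
    linarith





theorem stmt10 (A B : X → Set (Dual' X)) (hA : MaxMonotone A) (hB : MaxMonotone B)
    (hAfull : domOp A = Set.univ) (hBfull : domOp B = Set.univ) :
    MaxMonotone (opSum A B) := by
  have hAne : ∀ y : X, (A y).Nonempty := fun y => by
    have : y ∈ domOp A := by rw [hAfull]; trivial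
    exact this
  have hBne : ∀ y : X, (B y).Nonempty := fun y => by
    have : y ∈ domOp B := by rw [hBfull]; trivial
    exact this
  constructor
  · -- monotonicity of the sum
    intro x y x' y' hx hy
    obtain ⟨a1, ha1, b1, hb1, rfl⟩ := Set.mem_add.1 hx
    obtain ⟨a2, ha2, b2, hb2, rfl⟩ := Set.mem_add.1 hy
    have h1 := hA.1 x y a1 a2 ha1 ha2
    have h2 := hB.1 x y b1 b2 hb1 hb2
    simp only [ContinuousLinearMap.sub_apply, ContinuousLinearMap.add_apply] at h1 h2 ⊢
    linarith
  · intro x x' hrel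
    obtain ⟨δA, hδA, MA, hMA⟩ := locBdd A hA.1 hAfull x
    obtain ⟨δB, hδB, MB, hMB⟩ := locBdd B hB.1 hBfull x
    set M : ℝ := max MA MB with hM
    set K : Set (WeakDual ℝ X) := WeakDual.toStrongDual ⁻¹' Metric.closedBall 0 M with hK
    have hKcomp : IsCompact K := WeakDual.isCompact_closedBall (𝕜 := ℝ) (E := X) 0 M
    have hKmem : ∀ a : Dual' X, ‖a‖ ≤ M → StrongDual.toWeakDual a ∈ K := by
      intro a ha
      simp only [hK, mem_preimage, Metric.mem_closedBall, dist_zero_right]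
      exact ha
    -- the key pointwise estimate
    have key : ∀ z : X, ∃ a b : Dual' X,
        a ∈ A x ∧ ‖a‖ ≤ M ∧ b ∈ B x ∧ ‖b‖ ≤ M ∧ x' z ≤ a z + b z := by
      intro z
      set δ : ℝ := min δA δB with hδ
      have hδpos : 0 < δ := lt_min hδA hδB
      set t₁ : ℝ := min 1 (δ / (‖z‖ + 1)) with ht₁def
      have hzpos : (0:ℝ) < ‖z‖ + 1 := by positivity
      have ht₁ : 0 < t₁ := lt_min one_pos (by positivity)
      choose aa haa using fun t : ℝ => hAne (x + t • z)
      choose bb hbb using fun t : ℝ => hBne (x + t • z)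
      set l : Filter ℝ := 𝓝[>] (0:ℝ) with hl
      set F : ℝ → ℝ × WeakDual ℝ X × WeakDual ℝ X :=
        fun t => (t, StrongDual.toWeakDual (aa t), StrongDual.toWeakDual (bb t)) with hF
      have hIoc : Ioc (0:ℝ) t₁ ∈ l := Ioc_mem_nhdsGT ht₁
      have hnear : ∀ t ∈ Ioc (0:ℝ) t₁, ‖(x + t • z) - x‖ ≤ δ := by
        intro t ht
        have h1 : ‖(x + t • z) - x‖ = t * ‖z‖ := by
          rw [add_sub_cancel_left, norm_smul, Real.norm_eq_abs, abs_of_pos ht.1]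
        rw [h1]
        have h2 : t * ‖z‖ ≤ t₁ * (‖z‖ + 1) := by
          have := ht.2
          nlinarith [norm_nonneg z, ht.1.le]
        have h3 : t₁ * (‖z‖ + 1) ≤ δ := by
          have : t₁ ≤ δ / (‖z‖ + 1) := min_le_right _ _
          rw [le_div_iff₀ hzpos] at this
          exact this
        linarith
      have hbnd : ∀ t ∈ Ioc (0:ℝ) t₁, ‖aa t‖ ≤ M ∧ ‖bb t‖ ≤ M := by
        intro t ht
        constructor
        · exact le_trans (hMA _ _ (haa t) (le_trans (hnear t ht) (min_le_left _ _)))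
            (le_max_left _ _)
        · exact le_trans (hMB _ _ (hbb t) (le_trans (hnear t ht) (min_le_right _ _)))
            (le_max_right _ _)
      have hev : ∀ᶠ t in l, F t ∈ Icc (0:ℝ) 1 ×ˢ K ×ˢ K := by
        filter_upwards [hIoc] with t ht
        refine ⟨⟨ht.1.le, le_trans ht.2 (min_le_left _ _)⟩, ?_, ?_⟩
        · exact hKmem _ (hbnd t ht).1
        · exact hKmem _ (hbnd t ht).2
      have hcomp : IsCompact (Icc (0:ℝ) 1 ×ˢ K ×ˢ K) :=
        isCompact_Icc.prod (hKcomp.prod hKcomp)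
      have hle : Filter.map F l ≤ Filter.principal (Icc (0:ℝ) 1 ×ˢ K ×ˢ K) := by
        rw [le_principal_iff]; exact mem_map.2 hev
      obtain ⟨c, hcmem, hclu⟩ := hcomp.exists_mapClusterPt (u := F) hle
      -- first coordinate of the cluster point is 0
      have hc1 : c.1 = 0 := by
        have h1 : MapClusterPt c.1 l (Prod.fst ∘ F) :=
          hclu.continuousAt_comp continuous_fst.continuousAt
        have h2 : ClusterPt c.1 (𝓝 0) := by
          have : Filter.map (Prod.fst ∘ F) l = l := by
            have : (Prod.fst ∘ F) = fun t => t := rfl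
            rw [this, map_id']
          have h3 : ClusterPt c.1 l := by rw [mapClusterPt_def, this] at h1; exact h1
          exact h3.mono nhdsWithin_le_nhds
        exact eq_of_nhds_neBot h2
      set a'' : Dual' X := WeakDual.toStrongDual c.2.1 with ha''
      set b'' : Dual' X := WeakDual.toStrongDual c.2.2 with hb''
      have hcK : c.2.1 ∈ K ∧ c.2.2 ∈ K := ⟨hcmem.2.1, hcmem.2.2⟩
      have hanorm : ‖a''‖ ≤ M := by
        have := hcK.1
        simpa only [hK, mem_preimage, Metric.mem_closedBall, dist_zero_right] using this
      have hbnorm : ‖b''‖ ≤ M := by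
        have := hcK.2
        simpa only [hK, mem_preimage, Metric.mem_closedBall, dist_zero_right] using this
      -- a'' ∈ A x
      have haA : a'' ∈ A x := by
        refine hA.2 x a'' fun y y' hy' => ?_
        set s : Set (ℝ × WeakDual ℝ X × WeakDual ℝ X) :=
          {p | 0 ≤ p.2.1 (x - y) + p.1 * p.2.1 z - (y' (x - y) + p.1 * y' z)} with hset
        have hsc : IsClosed s := by
          refine isClosed_le continuous_const ?_
          have c1 : Continuous fun p : ℝ × WeakDual ℝ X × WeakDual ℝ X => p.2.1 (x - y) :=
            (WeakDual.eval_continuous (x - y)).comp (continuous_fst.comp continuous_snd)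
          have c2 : Continuous fun p : ℝ × WeakDual ℝ X × WeakDual ℝ X => p.1 * p.2.1 z :=
            continuous_fst.mul ((WeakDual.eval_continuous z).comp
              (continuous_fst.comp continuous_snd))
          have c3 : Continuous fun p : ℝ × WeakDual ℝ X × WeakDual ℝ X =>
              y' (x - y) + p.1 * y' z := continuous_const.add (continuous_fst.mul continuous_const)
          exact (c1.add c2).sub c3
        have hevs : ∀ᶠ t in l, F t ∈ s := by
          filter_upwards [hIoc] with t ht
          have hmono := hA.1 (x + t • z) y (aa t) y' (haa t) hy'
          have hexp : ((aa t) - y') ((x + t • z) - y)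
              = aa t (x - y) + t * aa t z - (y' (x - y) + t * y' z) := by
            have hpt : (x + t • z) - y = (x - y) + t • z := by abel
            rw [hpt]
            simp only [ContinuousLinearMap.sub_apply, map_add, map_smul, smul_eq_mul]
            ring
          show (0:ℝ) ≤ aa t (x - y) + t * aa t z - (y' (x - y) + t * y' z)
          rw [← hexp]
          exact hmono
        have hcs := mapClusterPt_mem_closed hclu hsc hevs
        have : 0 ≤ a'' (x - y) + c.1 * a'' z - (y' (x - y) + c.1 * y' z) := hcs
        rw [hc1] at this
        simp only [zero_mul, add_zero] at this
        simp only [ContinuousLinearMap.sub_apply]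
        linarith
      -- b'' ∈ B x
      have hbB : b'' ∈ B x := by
        refine hB.2 x b'' fun y y' hy' => ?_
        set s : Set (ℝ × WeakDual ℝ X × WeakDual ℝ X) :=
          {p | 0 ≤ p.2.2 (x - y) + p.1 * p.2.2 z - (y' (x - y) + p.1 * y' z)} with hset
        have hsc : IsClosed s := by
          refine isClosed_le continuous_const ?_
          have c1 : Continuous fun p : ℝ × WeakDual ℝ X × WeakDual ℝ X => p.2.2 (x - y) :=
            (WeakDual.eval_continuous (x - y)).comp (continuous_snd.comp continuous_snd)
          have c2 : Continuous fun p : ℝ × WeakDual ℝ X × WeakDual ℝ X => p.1 * p.2.2 z :=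
            continuous_fst.mul ((WeakDual.eval_continuous z).comp
              (continuous_snd.comp continuous_snd))
          have c3 : Continuous fun p : ℝ × WeakDual ℝ X × WeakDual ℝ X =>
              y' (x - y) + p.1 * y' z := continuous_const.add (continuous_fst.mul continuous_const)
          exact (c1.add c2).sub c3
        have hevs : ∀ᶠ t in l, F t ∈ s := by
          filter_upwards [hIoc] with t ht
          have hmono := hB.1 (x + t • z) y (bb t) y' (hbb t) hy'
          have hexp : ((bb t) - y') ((x + t • z) - y)
              = bb t (x - y) + t * bb t z - (y' (x - y) + t * y' z) := by
            have hpt : (x + t • z) - y = (x - y) + t • z := by abel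
            rw [hpt]
            simp only [ContinuousLinearMap.sub_apply, map_add, map_smul, smul_eq_mul]
            ring
          show (0:ℝ) ≤ bb t (x - y) + t * bb t z - (y' (x - y) + t * y' z)
          rw [← hexp]
          exact hmono
        have hcs := mapClusterPt_mem_closed hclu hsc hevs
        have : 0 ≤ b'' (x - y) + c.1 * b'' z - (y' (x - y) + c.1 * y' z) := hcs
        rw [hc1] at this
        simp only [zero_mul, add_zero] at this
        simp only [ContinuousLinearMap.sub_apply]
        linarith
      -- the inequality
      have hineq : x' z ≤ a'' z + b'' z := by
        set s : Set (ℝ × WeakDual ℝ X × WeakDual ℝ X) :=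
          {p | x' z ≤ p.2.1 z + p.2.2 z} with hset
        have hsc : IsClosed s := by
          refine isClosed_le continuous_const ?_
          exact ((WeakDual.eval_continuous z).comp (continuous_fst.comp continuous_snd)).add
            ((WeakDual.eval_continuous z).comp (continuous_snd.comp continuous_snd))
        have hevs : ∀ᶠ t in l, F t ∈ s := by
          filter_upwards [hIoc] with t ht
          have hmem : aa t + bb t ∈ opSum A B (x + t • z) :=
            Set.add_mem_add (haa t) (hbb t)
          have h0 := hrel (x + t • z) (aa t + bb t) hmem
          have hxy : x - (x + t • z) = -(t • z) := by abel
          rw [hxy] at h0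
          simp only [ContinuousLinearMap.sub_apply, ContinuousLinearMap.add_apply,
            map_neg, map_smul, smul_eq_mul] at h0
          have ht' := ht.1
          show x' z ≤ aa t z + bb t z
          nlinarith [h0, ht']
        exact mapClusterPt_mem_closed hclu hsc hevs
      exact ⟨a'', b'', haA, hanorm, hbB, hbnorm, hineq⟩
    exact finish_sep A B hA hB x x' M key
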